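/- arXiv:quant-ph/0604190 — 3 statements merged into one kernel-verified Lean document; each statement's English description precedes it below -/
import Mathlib

section
/- Let ρ₀ be a 4×4 complex hermitian matrix indexed by Fin 2 × Fin 2 with trace 1, such that ρ₀ is positive definite and det(ρ₀^Γ) = 0. Then rank(ρ₀^Γ) = 3; that is, 0 is an eigenvalue of ρ₀^Γ of multiplicity exactly one, so ρ₀ is a smooth point of the hypersurface D^Γ = {ρ hermitian, tr ρ = 1, det ρ^Γ = 0}. -/
open scoped ComplexOrder
open Matrix

/-- Partial transpose with respect to the second tensor factor:
`(ρ^Γ)_{(i,j),(k,l)} = ρ_{(i,l),(k,j)}`. -/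
def partialTranspose (ρ : Matrix (Fin 2 × Fin 2) (Fin 2 × Fin 2) ℂ) :
    Matrix (Fin 2 × Fin 2) (Fin 2 × Fin 2) ℂ :=
  fun p q => ρ (p.1, q.2) (q.1, p.2)

/-- Every monic-ish quadratic over ℂ has a root. -/
lemma quad_root (a b c : ℂ) (ha : a ≠ 0) : ∃ t : ℂ, a*t^2 + b*t + c = 0 := by
  obtain ⟨s, hs⟩ := IsAlgClosed.exists_pow_nat_eq (b^2 - 4*a*c) two_pos
  refine ⟨(-b + s) / (2*a), ?_⟩
  field_simp
  ring_nf
  ring_nf at hs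
  linear_combination hs

lemma rank_one_decomp (Z : Matrix (Fin 2) (Fin 2) ℂ) (h0 : Z ≠ 0) (hd : Z.det = 0) :
    ∃ e f : Fin 2 → ℂ, e ≠ 0 ∧ f ≠ 0 ∧ ∀ i j, Z i j = e i * f j := by
  rw [Matrix.det_fin_two] at hd
  by_cases hrow : Z 0 0 = 0 ∧ Z 0 1 = 0
  · -- first row zero
    refine ⟨![0, 1], ![Z 1 0, Z 1 1], ?_, ?_, ?_⟩
    · intro h; have := congrFun h 1; simp at this
    · intro h
      have h10 := congrFun h 0; have h11 := congrFun h 1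
      simp at h10 h11
      apply h0; ext i j
      fin_cases i <;> fin_cases j <;> simp [hrow.1, hrow.2, h10, h11]
    · intro i j; fin_cases i <;> fin_cases j <;> simp [hrow.1, hrow.2]
  · -- first row nonzero
    push_neg at hrow
    by_cases h00 : Z 0 0 = 0
    · have h01 : Z 0 1 ≠ 0 := hrow h00
      refine ⟨![1, Z 1 1 / Z 0 1], ![Z 0 0, Z 0 1], ?_, ?_, ?_⟩
      · intro h; have := congrFun h 0; simp at this
      · intro h; have := congrFun h 1; simp at this; exact h01 this
      · intro i j; fin_cases i <;> fin_cases j <;> simp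
        · -- Z 1 0 = Z 1 1 / Z 0 1 * Z 0 0
          rw [h00] at hd ⊢
          simp at hd ⊢
          rcases hd with h | h
          · exact absurd h h01
          · exact h
        · field_simp
    · refine ⟨![1, Z 1 0 / Z 0 0], ![Z 0 0, Z 0 1], ?_, ?_, ?_⟩
      · intro h; have := congrFun h 0; simp at this
      · intro h; have := congrFun h 0; simp at this; exact h00 this
      · intro i j; fin_cases i <;> fin_cases j <;> simp
        · field_simp
        · field_simp
          linear_combination hd

/-- If a two-qubit state `ρ₀` (hermitian, trace 1) is positive definite and
`det ρ₀^Γ = 0`, then `rank ρ₀^Γ = 3`, i.e. `0` is an eigenvalue of `ρ₀^Γ` of multiplicity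
exactly one, so `ρ₀` is a smooth point of the hypersurface `D^Γ`. -/
theorem rank_partialTranspose_of_posDef
    (ρ₀ : Matrix (Fin 2 × Fin 2) (Fin 2 × Fin 2) ℂ)
    (hherm : ρ₀.IsHermitian) (htr : ρ₀.trace = 1)
    (hpos : ρ₀.PosDef) (hdet : (partialTranspose ρ₀).det = 0) :
    (partialTranspose ρ₀).rank = 3 := by
  classical
  set A := partialTranspose ρ₀ with hA
  set K := LinearMap.ker A.mulVecLin with hK
  have hfin : A.rank + Module.finrank ℂ K = 4 := by
    have h := LinearMap.finrank_range_add_finrank_ker A.mulVecLin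
    rw [Module.finrank_pi] at h
    simpa [Matrix.rank] using h
  obtain ⟨v, hv0, hv⟩ := (Matrix.exists_mulVec_eq_zero_iff).2 hdet
  have hker1 : 1 ≤ Module.finrank ℂ K := by
    by_contra h
    push_neg at h
    interval_cases hh : Module.finrank ℂ K
    · have : K = ⊥ := Submodule.finrank_eq_zero.mp hh
      apply hv0
      have hvK : v ∈ K := LinearMap.mem_ker.mpr (by rw [Matrix.mulVecLin_apply]; exact hv)
      rw [this] at hvK
      simpa using hvK
  have hker2 : Module.finrank ℂ K ≤ 1 := by
    by_contra h
    push_neg at h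
    have h2 : 2 ≤ Module.finrank ℂ K := h
    let b := Module.finBasis ℂ K
    let i0 : Fin (Module.finrank ℂ K) := ⟨0, by omega⟩
    let i1 : Fin (Module.finrank ℂ K) := ⟨1, by omega⟩
    have hi01 : i0 ≠ i1 := by simp [i0, i1, Fin.ext_iff]
    set x : (Fin 2 × Fin 2) → ℂ := ((b i0 : K) : (Fin 2 × Fin 2) → ℂ) with hx
    set y : (Fin 2 × Fin 2) → ℂ := ((b i1 : K) : (Fin 2 × Fin 2) → ℂ) with hy
    have hxker : A *ᵥ x = 0 := by
      have h1 := LinearMap.mem_ker.mp (b i0).2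
      rw [Matrix.mulVecLin_apply] at h1
      exact h1
    have hyker : A *ᵥ y = 0 := by
      have h1 := LinearMap.mem_ker.mp (b i1).2
      rw [Matrix.mulVecLin_apply] at h1
      exact h1
    have hind : ∀ α β : ℂ, α • x + β • y = 0 → α = 0 ∧ β = 0 := by
      intro α β hab
      have h' : α • (b i0) + β • (b i1) = (0 : K) := by
        apply Subtype.coe_injective
        push_cast
        exact hab
      have hr : b.repr (α • (b i0) + β • (b i1)) = 0 := by rw [h']; exact b.repr.map_zero
      simp only [map_add, _root_.map_smul, Module.Basis.repr_self] at hr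
      constructor
      · have := congrArg (fun g => g i0) hr
        simpa [Finsupp.single_apply, hi01, hi01.symm] using this
      · have := congrArg (fun g => g i1) hr
        simpa [Finsupp.single_apply, hi01, hi01.symm] using this
    have hx0 : x ≠ 0 := by
      intro hx0
      have := hind 1 0 (by simp [hx0])
      exact one_ne_zero this.1
    have hy0 : y ≠ 0 := by
      intro hy0
      have := hind 0 1 (by simp [hy0])
      exact one_ne_zero this.2
    -- find a nonzero "product" combination
    have main : ∃ α β : ℂ, α • x + β • y ≠ 0 ∧
        ((α • x + β • y) (0,0)) * ((α • x + β • y) (1,1))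
          - ((α • x + β • y) (0,1)) * ((α • x + β • y) (1,0)) = 0 := by
      set dX : ℂ := x (0,0) * x (1,1) - x (0,1) * x (1,0) with hdX
      set dY : ℂ := y (0,0) * y (1,1) - y (0,1) * y (1,0) with hdY
      by_cases hX : dX = 0
      · exact ⟨1, 0, by simpa using hx0, by simpa using hX⟩
      by_cases hY : dY = 0
      · exact ⟨0, 1, by simpa using hy0, by simpa using hY⟩
      · obtain ⟨t, ht⟩ := quad_root dY
          (x (0,0) * y (1,1) + y (0,0) * x (1,1) - x (0,1) * y (1,0) - y (0,1) * x (1,0))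
          dX hY
        refine ⟨1, t, ?_, ?_⟩
        · intro hc
          have := hind 1 t hc
          exact one_ne_zero this.1
        · simp only [Pi.add_apply, Pi.smul_apply, smul_eq_mul, one_mul]
          rw [hdX, hdY] at ht
          linear_combination ht
    obtain ⟨α, β, hzne, hzdet⟩ := main
    set z : (Fin 2 × Fin 2) → ℂ := α • x + β • y with hz
    have hzker : A *ᵥ z = 0 := by
      rw [hz, Matrix.mulVec_add, Matrix.mulVec_smul, Matrix.mulVec_smul, hxker, hyker]
      simp
    obtain ⟨e, f, he0, hf0, hef⟩ :=
      rank_one_decomp (Matrix.of fun i j => z (i, j))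
        (by
          intro hc
          apply hzne
          funext p
          have := congrFun (congrFun hc p.1) p.2
          simpa using this)
        (by rw [Matrix.det_fin_two]; simpa using hzdet)
    have hzp : ∀ p : Fin 2 × Fin 2, z p = e p.1 * f p.2 := by
      intro p
      have := hef p.1 p.2
      simpa using this
    set w : (Fin 2 × Fin 2) → ℂ := fun p => e p.1 * (starRingEnd ℂ) (f p.2) with hw
    have hw0 : w ≠ 0 := by
      obtain ⟨i, hi⟩ := Function.ne_iff.mp he0
      obtain ⟨j, hj⟩ := Function.ne_iff.mp hf0
      intro hc
      have := congrFun hc (i, j)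
      simp [hw] at this
      rcases this with h | h
      · exact hi (by simpa using h)
      · exact hj (by simpa using h)
    have hlt := hpos.dotProduct_mulVec_pos hw0
    have key : dotProduct (star w) (ρ₀ *ᵥ w)
        = dotProduct (star z) (A *ᵥ z) := by
      simp only [dotProduct, Matrix.mulVec, Pi.star_apply, hA, partialTranspose,
        Fintype.sum_prod_type, Fin.sum_univ_two, hw, hzp, star_mul', _root_.map_mul,
        RingHom.id_apply, Complex.conj_conj, RCLike.star_def]
      ring
    rw [key, hzker] at hlt
    simp only [dotProduct_zero] at hlt
    exact lt_irrefl 0 hlt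
  omega
end

section
/- Let ρ₀ be a 4×4 complex hermitian matrix indexed by Fin 2 × Fin 2 with trace 1, such that ρ₀^Γ is positive definite and det ρ₀ = 0. Then rank ρ₀ = 3; that is, 0 is an eigenvalue of ρ₀ of multiplicity exactly one, so ρ₀ is a smooth point of the hypersurface D = {ρ hermitian, tr ρ = 1, det ρ = 0}. -/
open scoped ComplexOrder

open Matrix Polynomial

private lemma quad_root_s6 {A B C : ℂ} (hA : A ≠ 0) : ∃ t : ℂ, A * t ^ 2 + B * t + C = 0 := by
  obtain ⟨t, ht⟩ := Complex.exists_root (f := Polynomial.C A * X ^ 2 + Polynomial.C B * X +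
      Polynomial.C C) (by rw [Polynomial.degree_quadratic hA]; norm_num)
  exact ⟨t, by simpa [Polynomial.IsRoot] using ht⟩

private lemma factor2 (M : Matrix (Fin 2) (Fin 2) ℂ) (hM : M ≠ 0) (hd : M.det = 0) :
    ∃ a b : Fin 2 → ℂ, a ≠ 0 ∧ b ≠ 0 ∧ ∀ i l, M i l = a i * b l := by
  rw [Matrix.det_fin_two] at hd
  have : ∃ i l, M i l ≠ 0 := by
    by_contra h
    push_neg at h
    exact hM (by ext i l; simpa using h i l)
  obtain ⟨i₀, l₀, h0⟩ := this
  refine ⟨fun i => M i l₀ / M i₀ l₀, fun l => M i₀ l, ?_, ?_, ?_⟩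
  · intro h
    have := congrFun h i₀
    simp [div_self h0] at this
  · intro h
    exact h0 (congrFun h l₀)
  · intro i l
    field_simp
    have h2 : ∀ x : Fin 2, x = 0 ∨ x = 1 := by decide
    rcases h2 i₀ with rfl | rfl <;> rcases h2 l₀ with rfl | rfl <;>
      rcases h2 i with rfl | rfl <;> rcases h2 l with rfl | rfl <;>
      (first
        | ring1
        | linear_combination hd
        | linear_combination -hd)

/-- The key identity: for a product vector built from `a, b`, the quadratic form of the
partial transpose at `a ⊗ conj b` equals the quadratic form of `ρ` at `a ⊗ b`. -/
private lemma key_eq (ρ : Matrix (Fin 2 × Fin 2) (Fin 2 × Fin 2) ℂ) (a b : Fin 2 → ℂ) :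
    star (fun p : Fin 2 × Fin 2 => a p.1 * (starRingEnd ℂ) (b p.2)) ⬝ᵥ
      (partialTranspose ρ).mulVec (fun p : Fin 2 × Fin 2 => a p.1 * (starRingEnd ℂ) (b p.2)) =
    star (fun p : Fin 2 × Fin 2 => a p.1 * b p.2) ⬝ᵥ
      ρ.mulVec (fun p : Fin 2 × Fin 2 => a p.1 * b p.2) := by
  simp only [dotProduct, mulVec, partialTranspose, Fintype.sum_prod_type, Fin.sum_univ_two,
    Pi.star_apply, star_mul', Complex.star_def, Complex.conj_conj, _root_.map_mul]
  ring

/-- If `ρ₀` is a `4×4` hermitian matrix of trace 1 such that `ρ₀^Γ` is positive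
definite and `det ρ₀ = 0`, then `rank ρ₀ = 3`, i.e. `0` is an eigenvalue of `ρ₀` of
multiplicity exactly one, so `ρ₀` is a smooth point of the hypersurface `D`. -/
theorem rank_of_partialTranspose_posDef
    (ρ₀ : Matrix (Fin 2 × Fin 2) (Fin 2 × Fin 2) ℂ)
    (hherm : ρ₀.IsHermitian) (htr : ρ₀.trace = 1)
    (hpos : (partialTranspose ρ₀).PosDef) (hdet : ρ₀.det = 0) :
    ρ₀.rank = 3 := by
  classical
  -- No nonzero vector in the kernel has a rank-one `2×2` matrix form.
  have hker : ∀ u : Fin 2 × Fin 2 → ℂ, ρ₀.mulVec u = 0 → u ≠ 0 →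
      Matrix.det (Matrix.of fun i l : Fin 2 => u (i, l)) ≠ 0 := by
    intro u hu hne hdet0
    obtain ⟨a, b, ha, hb, hab⟩ := factor2 _ (by
      intro h
      apply hne
      ext ⟨i, l⟩
      simpa using congrFun (congrFun h i) l) hdet0
    have hu' : u = fun p : Fin 2 × Fin 2 => a p.1 * b p.2 := by
      ext ⟨i, l⟩; exact hab i l
    -- the product vector `a ⊗ conj b` is nonzero
    obtain ⟨i₁, hi₁⟩ := Function.ne_iff.mp ha
    obtain ⟨j₁, hj₁⟩ := Function.ne_iff.mp hb
    simp only [Pi.zero_apply] at hi₁ hj₁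
    have hx : (fun p : Fin 2 × Fin 2 => a p.1 * (starRingEnd ℂ) (b p.2)) ≠ 0 := by
      intro h
      have := congrFun h (i₁, j₁)
      simp only [Pi.zero_apply, mul_eq_zero, _root_.map_eq_zero] at this
      tauto
    have hlt := hpos.dotProduct_mulVec_pos hx
    rw [key_eq, ← hu', hu] at hlt
    simp at hlt
  -- the kernel of `mulVecLin` has dimension exactly 1
  have hrk := LinearMap.finrank_range_add_finrank_ker ρ₀.mulVecLin
  have hcard : Module.finrank ℂ (Fin 2 × Fin 2 → ℂ) = 4 := by simp
  rw [hcard] at hrk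
  have hrank : ρ₀.rank = Module.finrank ℂ (LinearMap.range ρ₀.mulVecLin) := rfl
  -- kernel nontrivial
  obtain ⟨v₀, hv₀, hv₀0⟩ := (Matrix.exists_mulVec_eq_zero_iff).mpr hdet
  have hk1 : 1 ≤ Module.finrank ℂ (LinearMap.ker ρ₀.mulVecLin) := by
    rw [Nat.one_le_iff_ne_zero, ← Nat.pos_iff_ne_zero]
    exact Module.finrank_pos_iff_exists_ne_zero.mpr
      ⟨⟨v₀, by simpa [Matrix.mulVecLin] using hv₀0⟩, by simpa using hv₀⟩
  have hk2 : Module.finrank ℂ (LinearMap.ker ρ₀.mulVecLin) ≤ 1 := by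
    by_contra h
    push_neg at h
    obtain ⟨f, hf⟩ := exists_linearIndependent_of_le_finrank (R := ℂ)
      (M := LinearMap.ker ρ₀.mulVecLin) (n := 2) h
    have hf' : LinearIndependent ℂ fun i => ((f i : Fin 2 × Fin 2 → ℂ)) :=
      hf.map' (LinearMap.ker ρ₀.mulVecLin).subtype (Submodule.ker_subtype _)
    set v : Fin 2 × Fin 2 → ℂ := ↑(f 0) with hv
    set w : Fin 2 × Fin 2 → ℂ := ↑(f 1) with hw
    have hvk : ρ₀.mulVec v = 0 := by
      rw [← Matrix.mulVecLin_apply]; exact LinearMap.mem_ker.mp (f 0).2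
    have hwk : ρ₀.mulVec w = 0 := by
      rw [← Matrix.mulVecLin_apply]; exact LinearMap.mem_ker.mp (f 1).2
    obtain ⟨hw0, hvw⟩ := linearIndependent_fin2.mp hf'
    set V : Matrix (Fin 2) (Fin 2) ℂ := Matrix.of fun i l => v (i, l) with hV
    set W : Matrix (Fin 2) (Fin 2) ℂ := Matrix.of fun i l => w (i, l) with hW
    by_cases hdW : W.det = 0
    · exact hker w hwk hw0 hdW
    · -- find a root `t` of `det (V + t • W) = 0`
      have hexp : ∀ t : ℂ, (Matrix.of fun i l : Fin 2 => (v + t • w) (i, l)).det =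
          W.det * t ^ 2 + (V 0 0 * W 1 1 + W 0 0 * V 1 1 - V 0 1 * W 1 0 - W 0 1 * V 1 0) * t
            + V.det := by
        intro t
        simp only [Matrix.det_fin_two, hV, hW, Matrix.of_apply, Pi.add_apply, Pi.smul_apply,
          smul_eq_mul]
        ring
      obtain ⟨t, ht⟩ := quad_root_s6 (B := V 0 0 * W 1 1 + W 0 0 * V 1 1 - V 0 1 * W 1 0
        - W 0 1 * V 1 0) (C := V.det) hdW
      have hmem : ρ₀.mulVec (v + t • w) = 0 := by
        rw [Matrix.mulVec_add, hvk, Matrix.mulVec_smul, hwk]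
        simp
      have hne : v + t • w ≠ 0 := by
        intro h0
        refine hvw (-t) ?_
        show (-t) • w = v
        rw [neg_smul]
        exact (eq_neg_of_add_eq_zero_left h0).symm
      exact hker _ hmem hne (by rw [hexp]; exact ht)
  -- conclude
  have : Module.finrank ℂ (LinearMap.ker ρ₀.mulVecLin) = 1 := le_antisymm hk2 hk1
  rw [hrank]
  omega
end

section
/- For every 4×4 complex matrix ρ indexed by Fin 2 × Fin 2 and all 2×2 unitary matrices U, V, one has det( ((U⊗V) ρ (U⊗V)†)^Γ ) = det( ρ^Γ ); that is, the polynomial function ρ ↦ det ρ^Γ is invariant under the group of local unitary transformations. -/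
open Kronecker
open scoped Matrix

lemma kron_conjT (A B : Matrix (Fin 2) (Fin 2) ℂ) :
    (A ⊗ₖ B)ᴴ = Aᴴ ⊗ₖ Bᴴ := by
  ext ⟨i, j⟩ ⟨k, l⟩
  simp [Matrix.conjTranspose_apply, mul_comm]

lemma pt_conj (ρ : Matrix (Fin 2 × Fin 2) (Fin 2 × Fin 2) ℂ)
    (U V : Matrix (Fin 2) (Fin 2) ℂ) :
    partialTranspose ((U ⊗ₖ V) * ρ * (U ⊗ₖ V)ᴴ)
      = (U ⊗ₖ Vᴴᵀ) * partialTranspose ρ * (U ⊗ₖ Vᴴᵀ)ᴴ := by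
  ext ⟨i, j⟩ ⟨k, l⟩
  simp only [partialTranspose, Matrix.mul_apply, Matrix.conjTranspose_apply,
    Matrix.kroneckerMap_apply, Matrix.transpose_apply, Fintype.sum_prod_type,
    Fin.sum_univ_two, star_mul', star_star]
  ring

/-- the function `ρ ↦ det ρ^Γ` is invariant under local unitary
transformations `ρ ↦ (U⊗V) ρ (U⊗V)†` for `2×2` unitary matrices `U, V`. -/
theorem det_partialTranspose_local_unitary_invariant
    (ρ : Matrix (Fin 2 × Fin 2) (Fin 2 × Fin 2) ℂ)
    (U V : Matrix (Fin 2) (Fin 2) ℂ)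
    (hU : U * Uᴴ = 1) (hV : V * Vᴴ = 1) :
    (partialTranspose ((U ⊗ₖ V) * ρ * (U ⊗ₖ V)ᴴ)).det = (partialTranspose ρ).det := by
  have hW : (U ⊗ₖ Vᴴᵀ) * (U ⊗ₖ Vᴴᵀ)ᴴ = 1 := by
    have hC : (Vᴴᵀ)ᴴ = Vᵀ := by
      ext i j; simp [Matrix.conjTranspose_apply]
    rw [kron_conjT, ← Matrix.mul_kronecker_mul, hC]
    have h2 : Vᴴᵀ * Vᵀ = 1 := by
      rw [← Matrix.transpose_mul, hV, Matrix.transpose_one]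
    rw [hU, h2, Matrix.one_kronecker_one]
  rw [pt_conj, Matrix.det_mul, Matrix.det_mul]
  have h1 : (U ⊗ₖ Vᴴᵀ).det * (U ⊗ₖ Vᴴᵀ)ᴴ.det = 1 := by
    rw [← Matrix.det_mul, hW, Matrix.det_one]
  calc (U ⊗ₖ Vᴴᵀ).det * (partialTranspose ρ).det * (U ⊗ₖ Vᴴᵀ)ᴴ.det
      = ((U ⊗ₖ Vᴴᵀ).det * (U ⊗ₖ Vᴴᵀ)ᴴ.det) * (partialTranspose ρ).det := by ring
    _ = (partialTranspose ρ).det := by rw [h1, one_mul]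
end
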